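/- If (a_i) is the Zeckendorf representation of n and (b_i) is the Chung-Graham representation of n, then ∑ a_i F_{i+2} = ∑ b_i F_{i+2} = n; furthermore, the map sending the Zeckendorf representation of n to the Chung-Graham representation of n is a bijection between the set of valid Zeckendorf strings and the set of valid Chung-Graham strings. -/

import Mathlib

/-- The value represented by a finitely supported digit sequence:
    `∑ i, a i * F (i+2)` where `F` is the Fibonacci sequence. -/
def fibVal (a : ℕ →₀ ℕ) : ℕ := a.sum fun i c => c * Nat.fib (i + 2)

/-- Zeckendorf conditions: binary digits with no two consecutive 1's. -/
def IsZeckendorf (a : ℕ →₀ ℕ) : Prop :=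
  (∀ i, a i ≤ 1) ∧ (∀ i, a i * a (i + 1) = 0)

/-- Chung-Graham conditions: digits in {0,1,2}, zero at odd indices, and
    between any two even indices carrying digit 2 there is an even index
    carrying digit 0. -/
def IsChungGraham (a : ℕ →₀ ℕ) : Prop :=
  (∀ i, a i ≤ 2) ∧ (∀ i, Odd i → a i = 0) ∧
  (∀ i j, Even i → Even j → i < j → a i = 2 → a j = 2 →
    ∃ k, Even k ∧ i < k ∧ k < j ∧ a k = 0)

/-- The `cgsplit` rule: digit 0 ↦ (0,0), 1 ↦ (0,1), 2 ↦ (1,1). -/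
def IsSplit (a b c : ℕ →₀ ℕ) : Prop :=
  ∀ i, (a i = 0 → b i = 0 ∧ c i = 0) ∧
       (a i = 1 → b i = 0 ∧ c i = 1) ∧
       (a i = 2 → b i = 1 ∧ c i = 1)

namespace ZCG
open Finsupp Nat

lemma fibVal_add (a b : ℕ →₀ ℕ) : fibVal (a + b) = fibVal a + fibVal b := by
  unfold fibVal
  exact Finsupp.sum_add_index' (fun i => by simp) (fun i b1 b2 => add_mul b1 b2 _)

lemma fibVal_single (i c : ℕ) : fibVal (Finsupp.single i c) = c * Nat.fib (i + 2) := by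
  unfold fibVal; exact Finsupp.sum_single_index (by simp)

lemma fibVal_zero : fibVal 0 = 0 := by simp [fibVal]

lemma fibVal_decomp (a : ℕ →₀ ℕ) (i : ℕ) :
    fibVal a = a i * Nat.fib (i + 2) + fibVal (a.erase i) := by
  conv_lhs => rw [← Finsupp.single_add_erase i a]
  rw [fibVal_add, fibVal_single]

lemma fib_pos2 (i : ℕ) : 0 < Nat.fib (i + 2) := Nat.fib_pos.2 (by omega)

lemma fib_lt_fib_arg {a b : ℕ} (h : Nat.fib a < Nat.fib b) : a < b := by
  by_contra hc
  exact absurd (Nat.fib_mono (by omega : b ≤ a)) (by omega)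

lemma succ_le_fib (m : ℕ) : m + 1 ≤ Nat.fib (m + 2) := by
  induction m with
  | zero => simp
  | succ k ih =>
    have h1 : 1 ≤ Nat.fib (k + 1) := Nat.fib_pos.2 (by omega)
    have h3 : Nat.fib (k + 3) = Nat.fib (k + 1) + Nat.fib (k + 2) := Nat.fib_add_two
    show k + 2 ≤ Nat.fib (k + 3)
    omega

lemma eq_zero_of_fibVal_eq_zero {a : ℕ →₀ ℕ} (h : fibVal a = 0) : a = 0 := by
  ext i
  by_contra hi
  have hi' : a i ≠ 0 := by simpa using hi
  have hmem : i ∈ a.support := Finsupp.mem_support_iff.2 hi'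
  have h0 : a i * Nat.fib (i + 2) = 0 :=
    (Finset.sum_eq_zero_iff (s := a.support)
      (f := fun i => a i * Nat.fib (i + 2))).1 h i hmem
  rcases Nat.mul_eq_zero.1 h0 with h1 | h1
  · exact hi' h1
  · exact absurd h1 (by have := fib_pos2 i; omega)

lemma fibVal_le_of_mem {a : ℕ →₀ ℕ} {i : ℕ} (h : i ∈ a.support) :
    Nat.fib (i + 2) ≤ fibVal a := by
  have h1 : 1 ≤ a i := Nat.one_le_iff_ne_zero.2 (Finsupp.mem_support_iff.1 h)
  have h2 := Nat.mul_le_mul_right (Nat.fib (i + 2)) h1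
  have := fibVal_decomp a i
  omega

/-- index of the greedy (largest) Fibonacci number `fib (k+2) ≤ n`. -/
def gK (n : ℕ) : ℕ := Nat.findGreatest (fun k => Nat.fib (k + 2) ≤ n) n

lemma gK_le {n : ℕ} (hn : 0 < n) : Nat.fib (gK n + 2) ≤ n :=
  Nat.findGreatest_spec (P := fun k => Nat.fib (k + 2) ≤ n) (Nat.zero_le n)
    (by simp; omega)

lemma gK_lt {n : ℕ} (hn : 0 < n) : n < Nat.fib (gK n + 3) := by
  by_contra hc
  push_neg at hc
  have hc' : Nat.fib (gK n + 1 + 2) ≤ n := hc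
  have hs := succ_le_fib (gK n + 1)
  have hg := Nat.findGreatest_is_greatest (P := fun k => Nat.fib (k + 2) ≤ n)
    (n := n) (k := gK n + 1) (Nat.lt_succ_self _) (by omega)
  exact hg hc'

lemma gK_greatest {n k : ℕ} (h : Nat.fib (k + 2) ≤ n) : k ≤ gK n := by
  refine Nat.le_findGreatest ?_ h
  have := succ_le_fib k
  omega

noncomputable def zeck : ℕ → (ℕ →₀ ℕ)
  | 0 => 0
  | (n + 1) =>
    Finsupp.single (gK (n + 1)) 1 + zeck (n + 1 - Nat.fib (gK (n + 1) + 2))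
  decreasing_by
    have := fib_pos2 (gK (n + 1))
    omega


lemma zeck_support : ∀ n, ∀ j ∈ (zeck n).support, Nat.fib (j + 2) ≤ n := by
  intro n
  induction n using Nat.strong_induction_on with
  | _ n ih =>
    match n with
    | 0 => simp [zeck]
    | (m + 1) =>
      intro j hj
      rw [zeck] at hj
      have hj' := Finsupp.support_add hj
      rcases Finset.mem_union.1 hj' with h | h
      · have := Finsupp.support_single_subset h
        simp at this
        subst this
        exact gK_le (Nat.succ_pos m)
      · have hlt : m + 1 - Nat.fib (gK (m + 1) + 2) < m + 1 := by
          have := fib_pos2 (gK (m + 1)); omega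
        have := ih _ hlt j h
        omega

lemma zeck_r_lt {n : ℕ} (hn : 0 < n) :
    n - Nat.fib (gK n + 2) < Nat.fib (gK n + 1) := by
  have h1 := gK_lt hn
  have h2 := gK_le hn
  have h3 : Nat.fib (gK n + 3) = Nat.fib (gK n + 1) + Nat.fib (gK n + 2) :=
    Nat.fib_add_two
  omega

lemma zeck_apply_eq_zero {n j : ℕ} (h : n < Nat.fib (j + 2)) : zeck n j = 0 := by
  by_contra hc
  exact absurd (zeck_support n j (Finsupp.mem_support_iff.2 hc)) (by omega)

lemma zeck_r_apply {n j : ℕ} (hn : 0 < n) (hj : gK n + 1 ≤ j + 2) :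
    zeck (n - Nat.fib (gK n + 2)) j = 0 := by
  apply zeck_apply_eq_zero
  calc n - Nat.fib (gK n + 2) < Nat.fib (gK n + 1) := zeck_r_lt hn
    _ ≤ Nat.fib (j + 2) := Nat.fib_mono hj

lemma zeck_isZeckendorf : ∀ n, IsZeckendorf (zeck n) := by
  intro n
  induction n using Nat.strong_induction_on with
  | _ n ih =>
    match n with
    | 0 => constructor <;> simp [zeck]
    | (m + 1) =>
      set K := gK (m + 1) with hK
      set r := m + 1 - Nat.fib (K + 2) with hr
      have hpos : 0 < m + 1 := Nat.succ_pos m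
      have hrlt : r < m + 1 := by
        have := fib_pos2 K; omega
      have IH := ih r hrlt
      have happ : ∀ j, zeck (m + 1) j = (Finsupp.single K 1) j + zeck r j := by
        intro j; rw [zeck]; rfl
      have hs : ∀ j, K + 1 ≤ j + 2 → zeck r j = 0 := fun j hj => zeck_r_apply hpos hj
      constructor
      · intro i
        rw [happ i]
        by_cases hiK : i = K
        · rw [hiK, hs K (by omega)]
          simp
        · rw [Finsupp.single_apply, if_neg (fun h => hiK h.symm)]
          simpa using IH.1 i
      · intro i
        rw [happ i, happ (i + 1)]
        by_cases h1 : i = K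
        · rw [h1, hs (K + 1) (by omega), Finsupp.single_eq_of_ne' (show K ≠ K + 1 by omega)]
          simp
        · by_cases h2 : i + 1 = K
          · rw [hs i (by omega)]
            rw [Finsupp.single_apply, if_neg (fun h => h1 h.symm)]
            simp
          · rw [Finsupp.single_apply, if_neg (fun h => h1 h.symm),
              Finsupp.single_apply, if_neg (fun h => h2 h.symm)]
            simpa using IH.2 i

lemma fibVal_zeck : ∀ n, fibVal (zeck n) = n := by
  intro n
  induction n using Nat.strong_induction_on with
  | _ n ih =>
    match n with
    | 0 => simp [zeck, fibVal_zero]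
    | (m + 1) =>
      have hpos : 0 < m + 1 := Nat.succ_pos m
      have hle := gK_le hpos
      have hrlt : m + 1 - Nat.fib (gK (m + 1) + 2) < m + 1 := by
        have := fib_pos2 (gK (m + 1)); omega
      rw [zeck, fibVal_add, fibVal_single, ih _ hrlt]
      omega

lemma erase_isZeckendorf {a : ℕ →₀ ℕ} (h : IsZeckendorf a) (i : ℕ) :
    IsZeckendorf (a.erase i) := by
  have happ : ∀ j, a.erase i j ≤ a j := by
    intro j
    by_cases hji : j = i
    · subst hji; rw [Finsupp.erase_same]; exact Nat.zero_le _
    · rw [Finsupp.erase_ne hji]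
  constructor
  · intro j; exact le_trans (happ j) (h.1 j)
  · intro j
    have := Nat.mul_le_mul (happ j) (happ (j + 1))
    have := h.2 j
    omega

lemma zeck_bound : ∀ m : ℕ, ∀ a : ℕ →₀ ℕ, IsZeckendorf a →
    (∀ i ∈ a.support, i < m) → fibVal a < Nat.fib (m + 2) := by
  intro m
  induction m using Nat.strong_induction_on with
  | _ m ih =>
    intro a ha hsupp
    match m with
    | 0 =>
      have : a = 0 := by
        ext i
        by_contra hc
        exact absurd (hsupp i (Finsupp.mem_support_iff.2 (by simpa using hc)))
          (by omega)
      rw [this, fibVal_zero]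
      simp
    | (p + 1) =>
      have hd := fibVal_decomp a p
      have herase : IsZeckendorf (a.erase p) := erase_isZeckendorf ha p
      by_cases hap : a p = 0
      · have hsupp' : ∀ i ∈ a.support, i < p := by
          intro i hi
          have := hsupp i hi
          have : i ≠ p := fun h => (Finsupp.mem_support_iff.1 hi) (h ▸ hap)
          omega
        have := ih p (Nat.lt_succ_self p) a ha hsupp'
        have := Nat.fib_mono (show p + 2 ≤ p + 1 + 2 by omega)
        omega
      · have hap1 : a p = 1 := by have := ha.1 p; omega
        have hfib3 : Nat.fib (p + 3) = Nat.fib (p + 1) + Nat.fib (p + 2) :=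
          Nat.fib_add_two
        match p with
        | 0 =>
          have : a.erase 0 = 0 := by
            ext i
            by_cases hi0 : i = 0
            · subst hi0; exact Finsupp.erase_same
            · rw [Finsupp.erase_ne hi0]
              by_contra hc
              exact absurd (hsupp i (Finsupp.mem_support_iff.2 (by simpa using hc)))
                (by omega)
          rw [hd, hap1, this, fibVal_zero]
          simp [Nat.fib]
        | (q + 1) =>
          have haq : a q = 0 := by
            have := ha.2 q
            rw [hap1] at this
            omega
          have hsupp' : ∀ i ∈ (a.erase (q + 1)).support, i < q := by
            intro i hi
            have hine : a.erase (q + 1) i ≠ 0 := Finsupp.mem_support_iff.1 hi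
            by_cases hiq : i = q + 1
            · subst hiq; rw [Finsupp.erase_same] at hine; exact absurd rfl hine
            · rw [Finsupp.erase_ne hiq] at hine
              have h1 := hsupp i (Finsupp.mem_support_iff.2 hine)
              have h2 : i ≠ q := fun h => hine (h ▸ haq)
              omega
          have hIH := ih q (by omega) (a.erase (q + 1)) herase hsupp'
          rw [hd, hap1]
          have hb1 : Nat.fib (q + 1 + 1 + 2) = Nat.fib (q + 2) + Nat.fib (q + 3) :=
            Nat.fib_add_two
          have hb2 : Nat.fib (q + 1 + 2) = Nat.fib (q + 3) := rfl
          omega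

lemma zeck_fibVal : ∀ n : ℕ, ∀ a : ℕ →₀ ℕ, IsZeckendorf a → fibVal a = n →
    zeck n = a := by
  intro n
  induction n using Nat.strong_induction_on with
  | _ n ih =>
    intro a ha hval
    match n with
    | 0 =>
      rw [show zeck 0 = 0 by simp [zeck]]
      exact (eq_zero_of_fibVal_eq_zero hval).symm
    | (m + 1) =>
      have hane : a ≠ 0 := by
        intro h; rw [h, fibVal_zero] at hval; exact absurd hval (by omega)
      have hne : a.support.Nonempty := Finsupp.support_nonempty_iff.2 hane
      set M := a.support.max' hne with hM
      have hMmem : M ∈ a.support := Finset.max'_mem _ hne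
      have haM : a M = 1 := by
        have h1 := ha.1 M
        have h2 := Finsupp.mem_support_iff.1 hMmem
        omega
      have hfibM : Nat.fib (M + 2) ≤ m + 1 := hval ▸ fibVal_le_of_mem hMmem
      have hub : fibVal a < Nat.fib (M + 3) := by
        have := zeck_bound (M + 1) a ha (fun i hi => by
          have := Finset.le_max' a.support i hi
          omega)
        exact this
      have hKM : gK (m + 1) = M := by
        have h1 : M ≤ gK (m + 1) := gK_greatest hfibM
        have h2 : gK (m + 1) ≤ M := by
          have hKle : Nat.fib (gK (m + 1) + 2) ≤ m + 1 := gK_le (Nat.succ_pos m)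
          have : Nat.fib (gK (m + 1) + 2) < Nat.fib (M + 3) := by omega
          have := fib_lt_fib_arg this
          omega
        omega
      have hdec := fibVal_decomp a M
      rw [haM, one_mul] at hdec
      have hrval : fibVal (a.erase M) = m + 1 - Nat.fib (M + 2) := by omega
      have hrlt : m + 1 - Nat.fib (M + 2) < m + 1 := by
        have := fib_pos2 M; omega
      have hIH := ih _ hrlt (a.erase M) (erase_isZeckendorf ha M) hrval
      rw [zeck, hKM, hIH, ← haM]
      exact Finsupp.single_add_erase M a


/-! ### Chung-Graham greedy representation -/

def gK2 (n : ℕ) : ℕ := Nat.findGreatest (fun k => Nat.fib (2 * k + 2) ≤ n) n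

lemma gK2_le {n : ℕ} (hn : 0 < n) : Nat.fib (2 * gK2 n + 2) ≤ n :=
  Nat.findGreatest_spec (P := fun k => Nat.fib (2 * k + 2) ≤ n) (Nat.zero_le n)
    (by simp; omega)

lemma gK2_lt {n : ℕ} (hn : 0 < n) : n < Nat.fib (2 * gK2 n + 4) := by
  by_contra hc
  push_neg at hc
  have hc' : Nat.fib (2 * (gK2 n + 1) + 2) ≤ n := by
    have : 2 * (gK2 n + 1) + 2 = 2 * gK2 n + 4 := by ring
    rw [this]; exact hc
  have hs := succ_le_fib (2 * gK2 n + 2)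
  have hg := Nat.findGreatest_is_greatest (P := fun k => Nat.fib (2 * k + 2) ≤ n)
    (n := n) (k := gK2 n + 1) (Nat.lt_succ_self _) (by
      have h24 : Nat.fib (2 * gK2 n + 4) = Nat.fib (2 * gK2 n + 2 + 2) := by ring_nf
      omega)
  exact hg hc'

lemma gK2_greatest {n k : ℕ} (h : Nat.fib (2 * k + 2) ≤ n) : k ≤ gK2 n := by
  refine Nat.le_findGreatest ?_ h
  have := succ_le_fib (2 * k)
  omega

/-- top digit of the greedy Chung-Graham representation -/
def cgc (n : ℕ) : ℕ := if 2 * Nat.fib (2 * gK2 n + 2) ≤ n then 2 else 1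

lemma cgc_one_le (n : ℕ) : 1 ≤ cgc n := by unfold cgc; split <;> omega

lemma cgc_le_two (n : ℕ) : cgc n ≤ 2 := by unfold cgc; split <;> omega

lemma cgc_two {n : ℕ} (hc : cgc n = 2) : 2 * Nat.fib (2 * gK2 n + 2) ≤ n := by
  by_contra h
  unfold cgc at hc
  rw [if_neg h] at hc
  omega

lemma cgc_one {n : ℕ} (hc : cgc n = 1) : n < 2 * Nat.fib (2 * gK2 n + 2) := by
  by_contra h
  unfold cgc at hc
  rw [if_pos (by omega)] at hc
  omega

lemma cgc_le {n : ℕ} (hn : 0 < n) : cgc n * Nat.fib (2 * gK2 n + 2) ≤ n := by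
  unfold cgc
  by_cases h : 2 * Nat.fib (2 * gK2 n + 2) ≤ n
  · rw [if_pos h]; exact h
  · rw [if_neg h]
    simpa using gK2_le hn

lemma fib24 (K : ℕ) : Nat.fib (2 * K + 4) = Nat.fib (2 * K + 2) + Nat.fib (2 * K + 3) := by
  have : Nat.fib (2 * K + 2 + 2) = Nat.fib (2 * K + 2) + Nat.fib (2 * K + 2 + 1) :=
    Nat.fib_add_two
  have e1 : 2 * K + 2 + 2 = 2 * K + 4 := by omega
  have e2 : 2 * K + 2 + 1 = 2 * K + 3 := by omega
  rw [e1, e2] at this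
  exact this

lemma fib23 (K : ℕ) : Nat.fib (2 * K + 3) = Nat.fib (2 * K + 1) + Nat.fib (2 * K + 2) := by
  have : Nat.fib (2 * K + 1 + 2) = Nat.fib (2 * K + 1) + Nat.fib (2 * K + 1 + 1) :=
    Nat.fib_add_two
  have e1 : 2 * K + 1 + 2 = 2 * K + 3 := by omega
  have e2 : 2 * K + 1 + 1 = 2 * K + 2 := by omega
  rw [e1, e2] at this
  exact this

lemma cg_r_lt {n : ℕ} (hn : 0 < n) :
    n - cgc n * Nat.fib (2 * gK2 n + 2) < Nat.fib (2 * gK2 n + 2) := by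
  have h4 := gK2_lt hn
  have h24 := fib24 (gK2 n)
  have h23 := fib23 (gK2 n)
  have hmono : Nat.fib (2 * gK2 n + 1) ≤ Nat.fib (2 * gK2 n + 2) :=
    Nat.fib_mono (by omega)
  unfold cgc
  by_cases h : 2 * Nat.fib (2 * gK2 n + 2) ≤ n
  · rw [if_pos h]; omega
  · rw [if_neg h]; push_neg at h; omega

lemma cg_r_lt2 {n : ℕ} (hn : 0 < n) (hc : cgc n = 2) :
    n - cgc n * Nat.fib (2 * gK2 n + 2) < Nat.fib (2 * gK2 n + 1) := by
  have h4 := gK2_lt hn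
  have h24 := fib24 (gK2 n)
  have h23 := fib23 (gK2 n)
  have h2 := cgc_two hc
  rw [hc]
  omega

noncomputable def cg : ℕ → (ℕ →₀ ℕ)
  | 0 => 0
  | (n + 1) =>
    Finsupp.single (2 * gK2 (n + 1)) (cgc (n + 1)) +
      cg (n + 1 - cgc (n + 1) * Nat.fib (2 * gK2 (n + 1) + 2))
  decreasing_by
    have h1 := cgc_one_le (n + 1)
    have h2 := fib_pos2 (2 * gK2 (n + 1))
    have := Nat.mul_le_mul h1 h2
    omega

lemma cg_support : ∀ n, ∀ j ∈ (cg n).support, Nat.fib (j + 2) ≤ n ∧ Even j := by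
  intro n
  induction n using Nat.strong_induction_on with
  | _ n ih =>
    match n with
    | 0 => simp [cg]
    | (m + 1) =>
      intro j hj
      rw [cg] at hj
      have hj' := Finsupp.support_add hj
      have hrlt : m + 1 - cgc (m + 1) * Nat.fib (2 * gK2 (m + 1) + 2) < m + 1 := by
        have h1 := cgc_one_le (m + 1)
        have h2 := fib_pos2 (2 * gK2 (m + 1))
        have := Nat.mul_le_mul h1 h2
        omega
      rcases Finset.mem_union.1 hj' with h | h
      · have := Finsupp.support_single_subset h
        simp at this
        subst this
        exact ⟨gK2_le (Nat.succ_pos m), even_two_mul _⟩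
      · have := ih _ hrlt j h
        exact ⟨by omega, this.2⟩

lemma cg_apply_eq_zero {n j : ℕ} (h : n < Nat.fib (j + 2)) : cg n j = 0 := by
  by_contra hc
  exact absurd (cg_support n j (Finsupp.mem_support_iff.2 hc)).1 (by omega)

lemma cg_odd_eq_zero {n j : ℕ} (h : Odd j) : cg n j = 0 := by
  by_contra hc
  have := (cg_support n j (Finsupp.mem_support_iff.2 hc)).2
  exact (Nat.not_even_iff_odd.2 h) this

lemma cg_app {m : ℕ} (j : ℕ) :
    cg (m + 1) j = (Finsupp.single (2 * gK2 (m + 1)) (cgc (m + 1))) j +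
      cg (m + 1 - cgc (m + 1) * Nat.fib (2 * gK2 (m + 1) + 2)) j := by
  rw [cg]; rfl

lemma cg_r_self (m : ℕ) :
    m + 1 - cgc (m + 1) * Nat.fib (2 * gK2 (m + 1) + 2) < m + 1 := by
  have h1 := cgc_one_le (m + 1)
  have h2 := fib_pos2 (2 * gK2 (m + 1))
  have := Nat.mul_le_mul h1 h2
  omega

lemma cg_r_supp {m j : ℕ}
    (h : cg (m + 1 - cgc (m + 1) * Nat.fib (2 * gK2 (m + 1) + 2)) j ≠ 0) :
    j < 2 * gK2 (m + 1) := by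
  have hmem := cg_support _ j (Finsupp.mem_support_iff.2 h)
  have hlt := cg_r_lt (show 0 < m + 1 by omega)
  have : Nat.fib (j + 2) < Nat.fib (2 * gK2 (m + 1) + 2) := by omega
  have := fib_lt_fib_arg this
  omega

lemma cg_top {m : ℕ} : cg (m + 1) (2 * gK2 (m + 1)) = cgc (m + 1) := by
  rw [cg_app]
  have h0 : cg (m + 1 - cgc (m + 1) * Nat.fib (2 * gK2 (m + 1) + 2))
      (2 * gK2 (m + 1)) = 0 := by
    by_contra hc
    exact absurd (cg_r_supp hc) (by omega)
  rw [h0, Finsupp.single_eq_same, add_zero]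

lemma cg_other {m j : ℕ} (h : j ≠ 2 * gK2 (m + 1)) :
    cg (m + 1) j = cg (m + 1 - cgc (m + 1) * Nat.fib (2 * gK2 (m + 1) + 2)) j := by
  rw [cg_app, Finsupp.single_eq_of_ne' (fun hh => h hh.symm), zero_add]

lemma cg_digit_le : ∀ n i, cg n i ≤ 2 := by
  intro n
  induction n using Nat.strong_induction_on with
  | _ n ih =>
    match n with
    | 0 => intro i; simp [cg]
    | (m + 1) =>
      intro i
      by_cases hi : i = 2 * gK2 (m + 1)
      · rw [hi, cg_top]; exact cgc_le_two _
      · rw [cg_other hi]; exact ih _ (cg_r_self m) i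

lemma fibVal_cg : ∀ n, fibVal (cg n) = n := by
  intro n
  induction n using Nat.strong_induction_on with
  | _ n ih =>
    match n with
    | 0 => simp [cg, fibVal_zero]
    | (m + 1) =>
      have hle := cgc_le (show 0 < m + 1 by omega)
      rw [cg, fibVal_add, fibVal_single, ih _ (cg_r_self m)]
      omega

/-- pair condition for `cg n` -/
def CgPair (n : ℕ) : Prop :=
  ∀ i j, Even i → Even j → i < j → cg n i = 2 → cg n j = 2 →
    ∃ k, Even k ∧ i < k ∧ k < j ∧ cg n k = 0

/-- strengthened invariant: any digit `2` has an even zero above it, below `2m`,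
provided `n < fib (2m+1)`. -/
def CgZ2 (n : ℕ) : Prop :=
  ∀ m, n < Nat.fib (2 * m + 1) → ∀ j, cg n j = 2 →
    ∃ k, Even k ∧ j < k ∧ k < 2 * m ∧ cg n k = 0

lemma cg_CZ : ∀ n, CgZ2 n ∧ CgPair n := by
  intro n
  induction n using Nat.strong_induction_on with
  | _ n ih =>
    match n with
    | 0 =>
      constructor
      · intro m hm j hj; rw [show cg 0 = 0 by simp [cg]] at hj; simp at hj
      · intro i j _ _ _ hi; rw [show cg 0 = 0 by simp [cg]] at hi; simp at hi
    | (p + 1) =>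
      obtain ⟨K, hK⟩ : ∃ K, gK2 (p + 1) = K := ⟨_, rfl⟩
      obtain ⟨c, hc⟩ : ∃ c, cgc (p + 1) = c := ⟨_, rfl⟩
      obtain ⟨r, hrdef⟩ : ∃ r, p + 1 - c * Nat.fib (2 * K + 2) = r := ⟨_, rfl⟩
      have hc1 : 1 ≤ c := hc ▸ cgc_one_le (p + 1)
      have hcle2 : c ≤ 2 := hc ▸ cgc_le_two (p + 1)
      have hfible : Nat.fib (2 * K + 2) ≤ p + 1 := by
        rw [← hK]; exact gK2_le (show 0 < p + 1 by omega)
      have hfiblt : p + 1 < Nat.fib (2 * K + 4) := by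
        rw [← hK]; exact gK2_lt (show 0 < p + 1 by omega)
      have hctwo : c = 2 → 2 * Nat.fib (2 * K + 2) ≤ p + 1 := by
        intro h2; rw [← hK]; exact cgc_two (hc.trans h2)
      have hrlt : r < p + 1 := by
        rw [← hrdef, ← hK, ← hc]; exact cg_r_self p
      have hrlt1 : r < Nat.fib (2 * K + 2) := by
        have := cg_r_lt (show 0 < p + 1 by omega)
        rw [hK, hc, hrdef] at this
        exact this
      have hrlt2 : c = 2 → r < Nat.fib (2 * K + 1) := by
        intro h2
        have := cg_r_lt2 (show 0 < p + 1 by omega) (hc.trans h2)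
        rw [hK, hc, hrdef] at this
        exact this
      have htop : cg (p + 1) (2 * K) = c := by
        rw [← hK, ← hc]; exact cg_top
      have hother : ∀ j, j ≠ 2 * K → cg (p + 1) j = cg r j := by
        intro j hj
        rw [← hrdef, ← hK, ← hc]
        exact cg_other (by rw [hK]; exact hj)
      have hjlt : ∀ j, cg r j ≠ 0 → j < 2 * K := by
        intro j hj
        rw [← hrdef, ← hK, ← hc] at hj
        rw [← hK]
        exact cg_r_supp hj
      have h24 := fib24 K
      have h23 := fib23 K
      have IH := ih r hrlt
      have habove : ∀ j, 2 * K < j → cg (p + 1) j = 0 := by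
        intro j hj
        rw [hother j (by omega)]
        by_contra hne
        exact absurd (hjlt j hne) (by omega)
      have hinner : r < Nat.fib (2 * K + 1) → ∀ j, j ≠ 2 * K → cg (p + 1) j = 2 →
          ∃ k, Even k ∧ j < k ∧ k < 2 * K ∧ cg (p + 1) k = 0 := by
        intro hrs j hjne hj2
        rw [hother j hjne] at hj2
        obtain ⟨k, hke, hk1, hk2, hk0⟩ := IH.1 K hrs j hj2
        exact ⟨k, hke, hk1, hk2, by rw [hother k (by omega)]; exact hk0⟩
      have hZ2 : CgZ2 (p + 1) := by
        intro m hm j hj2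
        have hKm : 2 * K + 2 < 2 * m + 1 := by
          apply fib_lt_fib_arg
          omega
        by_cases hj : j = 2 * K
        · -- top digit is 2
          have hc2 : c = 2 := by rw [hj, htop] at hj2; exact hj2
          have h2f := hctwo hc2
          have hKm2 : 2 * K + 4 ≤ 2 * m := by
            by_contra hcon
            have hm' : m = K + 1 := by omega
            subst hm'
            have e1 : 2 * (K + 1) + 1 = 2 * K + 3 := by ring
            rw [e1] at hm
            have hmono : Nat.fib (2 * K + 1) ≤ Nat.fib (2 * K + 2) :=
              Nat.fib_mono (by omega)
            omega
          refine ⟨2 * K + 2, by simp [parity_simps], by omega, by omega, ?_⟩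
          exact habove _ (by omega)
        · -- digit 2 strictly inside
          by_cases hcc : c = 2
          · obtain ⟨k, hke, h1, h2, h0⟩ := hinner (hrlt2 hcc) j hj hj2
            exact ⟨k, hke, h1, by omega, h0⟩
          · have hc1' : c = 1 := by omega
            by_cases hsub : p + 1 < Nat.fib (2 * K + 3)
            · have hrs : r < Nat.fib (2 * K + 1) := by
                rw [← hrdef, hc1']
                omega
              obtain ⟨k, hke, h1, h2, h0⟩ := hinner hrs j hj hj2
              exact ⟨k, hke, h1, by omega, h0⟩
            · push_neg at hsub
              have hKm2 : 2 * K + 3 < 2 * m + 1 := by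
                apply fib_lt_fib_arg
                omega
              have hjK : j < 2 * K := by
                apply hjlt
                rw [← hother j hj]
                omega
              refine ⟨2 * K + 2, by simp [parity_simps], by omega, by omega, ?_⟩
              exact habove _ (by omega)
      refine ⟨hZ2, ?_⟩
      intro i j hie hje hij hi2 hj2
      by_cases hjK : j = 2 * K
      · have hc2 : c = 2 := by rw [hjK, htop] at hj2; exact hj2
        obtain ⟨k, hke, h1, h2, h0⟩ := hinner (hrlt2 hc2) i (by omega) hi2
        exact ⟨k, hke, h1, by omega, h0⟩
      · have hjK' : j < 2 * K := by
          apply hjlt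
          rw [← hother j hjK]
          omega
        have hiK : i ≠ 2 * K := by omega
        rw [hother i hiK] at hi2
        rw [hother j hjK] at hj2
        obtain ⟨k, hke, h1, h2, h0⟩ := IH.2 i j hie hje hij hi2 hj2
        refine ⟨k, hke, h1, h2, ?_⟩
        rw [hother k (by omega)]
        exact h0

lemma cg_isCG (n : ℕ) : IsChungGraham (cg n) :=
  ⟨cg_digit_le n, fun i hi => cg_odd_eq_zero hi, (cg_CZ n).2⟩


lemma erase_isCG {b : ℕ →₀ ℕ} (h : IsChungGraham b) (i : ℕ) :
    IsChungGraham (b.erase i) := by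
  refine ⟨?_, ?_, ?_⟩
  · intro j
    by_cases hj : j = i
    · rw [hj, Finsupp.erase_same]; omega
    · rw [Finsupp.erase_ne hj]; exact h.1 j
  · intro j hj
    by_cases hji : j = i
    · rw [hji, Finsupp.erase_same]
    · rw [Finsupp.erase_ne hji]; exact h.2.1 j hj
  · intro p q hpe hqe hpq hp2 hq2
    have hpne : p ≠ i := by
      intro hh; rw [hh, Finsupp.erase_same] at hp2; omega
    have hqne : q ≠ i := by
      intro hh; rw [hh, Finsupp.erase_same] at hq2; omega
    rw [Finsupp.erase_ne hpne] at hp2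
    rw [Finsupp.erase_ne hqne] at hq2
    obtain ⟨k, hke, h1, h2, h0⟩ := h.2.2 p q hpe hqe hpq hp2 hq2
    refine ⟨k, hke, h1, h2, ?_⟩
    by_cases hki : k = i
    · rw [hki, Finsupp.erase_same]
    · rw [Finsupp.erase_ne hki]; exact h0

lemma even_of_ne_zero {b : ℕ →₀ ℕ} (h : IsChungGraham b) {i : ℕ} (hi : b i ≠ 0) :
    i % 2 = 0 := by
  rcases Nat.even_or_odd i with he | ho
  · exact Nat.even_iff.1 he
  · exact absurd (h.2.1 i ho) hi

/-- bound for strings sitting below a digit 2 -/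
def CgBdA (m : ℕ) : Prop := ∀ b : ℕ →₀ ℕ, IsChungGraham b →
  (∀ i ∈ b.support, i + 2 ≤ 2 * m) →
  (∀ j, b j = 2 → ∃ k, Even k ∧ j < k ∧ k + 2 ≤ 2 * m ∧ b k = 0) →
  fibVal b ≤ Nat.fib (2 * m + 1) - 1

/-- plain bound for Chung-Graham strings -/
def CgBdB (m : ℕ) : Prop := ∀ b : ℕ →₀ ℕ, IsChungGraham b →
  (∀ i ∈ b.support, i ≤ 2 * m) → fibVal b ≤ Nat.fib (2 * m + 4) - 1

lemma cg_bounds : ∀ m : ℕ, CgBdA m ∧ CgBdB m := by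
  intro m
  induction m using Nat.strong_induction_on with
  | _ m ih =>
    have hA : CgBdA m := by
      match m with
      | 0 =>
        intro b hb hsupp hwit
        have hb0 : b = 0 := by
          ext i
          by_contra hc
          have := hsupp i (Finsupp.mem_support_iff.2 (by simpa using hc))
          omega
        rw [hb0, fibVal_zero]
        simp
      | (v + 1) =>
        intro b hb hsupp hwit
        have hd2 : b (2 * v) ≠ 2 := by
          intro h2
          obtain ⟨k, hke, h1, h2', h0⟩ := hwit _ h2
          omega
        have hd01 : b (2 * v) ≤ 1 := by have := hb.1 (2 * v); omega
        have egoal : Nat.fib (2 * (v + 1) + 1) = Nat.fib (2 * v + 3) := by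
          congr 1 <;> ring
        rw [egoal]
        by_cases hd : b (2 * v) = 0
        · -- plain bound applies
          match v with
          | 0 =>
            have hb0 : b = 0 := by
              ext i
              by_contra hc
              have hc' : b i ≠ 0 := by simpa using hc
              have h1 := hsupp i (Finsupp.mem_support_iff.2 hc')
              have : i = 0 := by omega
              rw [this] at hc'
              exact hc' hd
            rw [hb0, fibVal_zero]
            simp
          | (w + 1) =>
            have hsupp' : ∀ i ∈ b.support, i ≤ 2 * w := by
              intro i hi
              have h1 := hsupp i hi
              have h2 : i ≠ 2 * (w + 1) := by
                intro hh
                have : (2 : ℕ) * (w + 1) = 2 * w + 2 := by ring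
                rw [hh, this] at hi
                rw [show (2 : ℕ) * w + 2 = 2 * (w+1) by ring] at hi
                exact (Finsupp.mem_support_iff.1 hi) hd
              have h3 := even_of_ne_zero hb (Finsupp.mem_support_iff.1 hi)
              omega
            have hB := (ih w (by omega)).2 b hb hsupp'
            have eb : Nat.fib (2 * w + 4) = Nat.fib (2 * (w + 1) + 2) := by
              congr 1 <;> ring
            have em : Nat.fib (2 * (w + 1) + 2) ≤ Nat.fib (2 * (w + 1) + 3) :=
              Nat.fib_mono (by omega)
            omega
        · -- top digit is 1, recurse with A
          have hd1 : b (2 * v) = 1 := by omega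
          have hdec := fibVal_decomp b (2 * v)
          have he : IsChungGraham (b.erase (2 * v)) := erase_isCG hb (2 * v)
          have hsupp' : ∀ i ∈ (b.erase (2 * v)).support, i + 2 ≤ 2 * v := by
            intro i hi
            have hne := Finsupp.mem_support_iff.1 hi
            have hii : i ≠ 2 * v := by
              intro hh; rw [hh, Finsupp.erase_same] at hne; exact hne rfl
            rw [Finsupp.erase_ne hii] at hne
            have h1 := hsupp i (Finsupp.mem_support_iff.2 hne)
            have h3 := even_of_ne_zero hb hne
            omega
          have hwit' : ∀ j, b.erase (2 * v) j = 2 →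
              ∃ k, Even k ∧ j < k ∧ k + 2 ≤ 2 * v ∧ b.erase (2 * v) k = 0 := by
            intro j hj
            have hjne : j ≠ 2 * v := by
              intro hh; rw [hh, Finsupp.erase_same] at hj; omega
            rw [Finsupp.erase_ne hjne] at hj
            obtain ⟨k, hke, h1, h2, h0⟩ := hwit j hj
            have hkne : k ≠ 2 * v := by
              intro hh; rw [hh, hd1] at h0; omega
            have hkeven := Nat.even_iff.1 hke
            exact ⟨k, hke, h1, by omega, by rw [Finsupp.erase_ne hkne]; exact h0⟩
          have hAv := (ih v (by omega)).1 _ he hsupp' hwit'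
          have h23 := fib23 v
          have hpos1 : 0 < Nat.fib (2 * v + 1) := Nat.fib_pos.2 (by omega)
          have hpos2 : 0 < Nat.fib (2 * v + 2) := fib_pos2 (2 * v)
          rw [hd1, one_mul] at hdec
          omega
    refine ⟨hA, ?_⟩
    intro b hb hsupp
    have h24 := fib24 m
    have h23 := fib23 m
    have hdec := fibVal_decomp b (2 * m)
    have he : IsChungGraham (b.erase (2 * m)) := erase_isCG hb (2 * m)
    by_cases hd : b (2 * m) = 2
    · -- top digit 2 : use A at m
      have hsupp' : ∀ i ∈ (b.erase (2 * m)).support, i + 2 ≤ 2 * m := by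
        intro i hi
        have hne := Finsupp.mem_support_iff.1 hi
        have hii : i ≠ 2 * m := by
          intro hh; rw [hh, Finsupp.erase_same] at hne; exact hne rfl
        rw [Finsupp.erase_ne hii] at hne
        have h1 := hsupp i (Finsupp.mem_support_iff.2 hne)
        have h3 := even_of_ne_zero hb hne
        omega
      have hwit' : ∀ j, b.erase (2 * m) j = 2 →
          ∃ k, Even k ∧ j < k ∧ k + 2 ≤ 2 * m ∧ b.erase (2 * m) k = 0 := by
        intro j hj
        have hjne : j ≠ 2 * m := by
          intro hh; rw [hh, Finsupp.erase_same] at hj; omega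
        rw [Finsupp.erase_ne hjne] at hj
        have hjeven : j % 2 = 0 := even_of_ne_zero hb (by rw [hj]; omega)
        have hjlt : j < 2 * m := by
          have := hsupp j (Finsupp.mem_support_iff.2 (by rw [hj]; omega))
          omega
        obtain ⟨k, hke, h1, h2, h0⟩ := hb.2.2 j (2 * m)
          (Nat.even_iff.2 hjeven) (even_two_mul m) hjlt hj hd
        have hkeven := Nat.even_iff.1 hke
        have hkne : k ≠ 2 * m := by omega
        exact ⟨k, hke, h1, by omega, by rw [Finsupp.erase_ne hkne]; exact h0⟩
      have hAm := hA _ he hsupp' hwit'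
      have hpos := fib_pos2 (2 * m)
      have hpos1 : 0 < Nat.fib (2 * m + 1) := Nat.fib_pos.2 (by omega)
      rw [hd] at hdec
      omega
    · -- top digit ≤ 1
      have hd1 : b (2 * m) ≤ 1 := by have := hb.1 (2 * m); omega
      match m with
      | 0 =>
        have hb0 : b.erase 0 = 0 := by
          ext i
          by_cases hi0 : i = 0
          · rw [hi0]; exact Finsupp.erase_same
          · rw [Finsupp.erase_ne hi0]
            by_contra hc
            have := hsupp i (Finsupp.mem_support_iff.2 (by simpa using hc))
            omega
        have : (2 : ℕ) * 0 = 0 := by norm_num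
        rw [this] at hdec hd1
        rw [hb0, fibVal_zero] at hdec
        have hf2 : Nat.fib (0 + 2) = 1 := by norm_num [Nat.fib]
        have hf4 : Nat.fib (2 * 0 + 4) = 3 := by norm_num [Nat.fib]
        rw [hf2, mul_one] at hdec
        omega
      | (s + 1) =>
        have hsupp' : ∀ i ∈ (b.erase (2 * (s + 1))).support, i ≤ 2 * s := by
          intro i hi
          have hne := Finsupp.mem_support_iff.1 hi
          have hii : i ≠ 2 * (s + 1) := by
            intro hh; rw [hh, Finsupp.erase_same] at hne; exact hne rfl
          rw [Finsupp.erase_ne hii] at hne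
          have h1 := hsupp i (Finsupp.mem_support_iff.2 hne)
          have h3 := even_of_ne_zero hb hne
          omega
        have hB := (ih s (by omega)).2 _ he hsupp'
        have eb : Nat.fib (2 * s + 4) = Nat.fib (2 * (s + 1) + 2) := by
          congr 1 <;> ring
        have hmul : b (2 * (s + 1)) * Nat.fib (2 * (s + 1) + 2) ≤
            Nat.fib (2 * (s + 1) + 2) := by
          have := Nat.mul_le_mul_right (Nat.fib (2 * (s + 1) + 2)) hd1
          omega
        have hpos1 : 0 < Nat.fib (2 * (s + 1) + 1) := Nat.fib_pos.2 (by omega)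
        have hpos2 : 0 < Nat.fib (2 * (s + 1) + 2) := fib_pos2 (2 * (s + 1))
        omega

lemma cg_fibVal : ∀ n : ℕ, ∀ b : ℕ →₀ ℕ, IsChungGraham b → fibVal b = n →
    cg n = b := by
  intro n
  induction n using Nat.strong_induction_on with
  | _ n ih =>
    intro b hb hval
    match n with
    | 0 =>
      rw [show cg 0 = 0 by simp [cg]]
      exact (eq_zero_of_fibVal_eq_zero hval).symm
    | (m + 1) =>
      have hbne : b ≠ 0 := by
        intro h; rw [h, fibVal_zero] at hval; exact absurd hval (by omega)
      have hne : b.support.Nonempty := Finsupp.support_nonempty_iff.2 hbne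
      obtain ⟨t, ht⟩ : ∃ t, b.support.max' hne = 2 * t := by
        have hmem := Finset.max'_mem _ hne
        have := even_of_ne_zero hb (Finsupp.mem_support_iff.1 hmem)
        exact ⟨(b.support.max' hne) / 2, by omega⟩
      have hMmem : 2 * t ∈ b.support := ht ▸ Finset.max'_mem _ hne
      have hMmax : ∀ i ∈ b.support, i ≤ 2 * t := fun i hi =>
        ht ▸ Finset.le_max' _ i hi
      have hbM : 1 ≤ b (2 * t) := by
        have := Finsupp.mem_support_iff.1 hMmem
        omega
      have hbM2 : b (2 * t) ≤ 2 := hb.1 _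
      have hfibM : Nat.fib (2 * t + 2) ≤ m + 1 := hval ▸ fibVal_le_of_mem hMmem
      have hub : m + 1 ≤ Nat.fib (2 * t + 4) - 1 :=
        hval ▸ (cg_bounds t).2 b hb hMmax
      have hfpos := fib_pos2 (2 * t + 2)
      have e1 : (2 : ℕ) * t + 2 + 2 = 2 * t + 4 := by omega
      rw [e1] at hfpos
      have hKM : gK2 (m + 1) = t := by
        have h1 : t ≤ gK2 (m + 1) := gK2_greatest hfibM
        have h2 : gK2 (m + 1) ≤ t := by
          have hKle : Nat.fib (2 * gK2 (m + 1) + 2) ≤ m + 1 :=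
            gK2_le (show 0 < m + 1 by omega)
          have hlt : Nat.fib (2 * gK2 (m + 1) + 2) < Nat.fib (2 * t + 4) := by
            omega
          have := fib_lt_fib_arg hlt
          omega
        omega
      have hdec := fibVal_decomp b (2 * t)
      have herase : IsChungGraham (b.erase (2 * t)) := erase_isCG hb (2 * t)
      -- the top digit of the greedy expansion agrees
      have hcM : cgc (m + 1) = b (2 * t) := by
        unfold cgc
        rw [hKM]
        rcases (by omega : b (2 * t) = 1 ∨ b (2 * t) = 2) with h1 | h2
        · rw [if_neg, h1]
          rw [h1, one_mul] at hdec
          have hsupp' : ∀ i ∈ (b.erase (2 * t)).support, i ≤ 2 * t := by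
            intro i hi
            have hne' := Finsupp.mem_support_iff.1 hi
            have hii : i ≠ 2 * t := by
              intro hh; rw [hh, Finsupp.erase_same] at hne'; exact hne' rfl
            rw [Finsupp.erase_ne hii] at hne'
            exact hMmax i (Finsupp.mem_support_iff.2 hne')
          -- bound the rest strictly below fib (2t+2)
          have hrest : fibVal (b.erase (2 * t)) < Nat.fib (2 * t + 2) := by
            match t with
            | 0 =>
              have hb0 : b.erase 0 = 0 := by
                ext i
                by_cases hi0 : i = 0
                · rw [hi0]; exact Finsupp.erase_same
                · rw [Finsupp.erase_ne hi0]
                  by_contra hc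
                  have hc' : b i ≠ 0 := by simpa using hc
                  have h3 := even_of_ne_zero hb hc'
                  have := hMmax i (Finsupp.mem_support_iff.2 hc')
                  omega
              rw [show (2:ℕ) * 0 = 0 by norm_num, hb0, fibVal_zero]
              exact fib_pos2 0
            | (w + 1) =>
              have hsupp'' : ∀ i ∈ (b.erase (2 * (w + 1))).support, i ≤ 2 * w := by
                intro i hi
                have hne' := Finsupp.mem_support_iff.1 hi
                have hii : i ≠ 2 * (w + 1) := by
                  intro hh; rw [hh, Finsupp.erase_same] at hne'; exact hne' rfl
                rw [Finsupp.erase_ne hii] at hne'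
                have h1' := hMmax i (Finsupp.mem_support_iff.2 hne')
                have h3 := even_of_ne_zero hb hne'
                omega
              have hB := (cg_bounds w).2 _ (erase_isCG hb _) hsupp''
              have eb : Nat.fib (2 * w + 4) = Nat.fib (2 * (w + 1) + 2) := by
                congr 1 <;> ring
              have hfp := fib_pos2 (2 * (w + 1))
              omega
          omega
        · rw [if_pos, h2]
          rw [h2] at hdec
          omega
      have hrval : fibVal (b.erase (2 * t)) =
          m + 1 - cgc (m + 1) * Nat.fib (2 * t + 2) := by
        rw [hcM]; omega
      have hrlt : m + 1 - cgc (m + 1) * Nat.fib (2 * t + 2) < m + 1 := by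
        have h1 := cgc_one_le (m + 1)
        have := Nat.mul_le_mul h1 (le_refl (Nat.fib (2 * t + 2)))
        have h2 := fib_pos2 (2 * t)
        omega
      have hIH := ih _ hrlt (b.erase (2 * t)) herase hrval
      rw [cg, hKM, hIH, hcM]
      exact Finsupp.single_add_erase (2 * t) b

end ZCG


theorem zeckendorf_chung_graham_bijection :
    (∀ n : ℕ, ∀ a b : ℕ →₀ ℕ,
      IsZeckendorf a → fibVal a = n → IsChungGraham b → fibVal b = n →
      fibVal a = fibVal b) ∧
    (∃ f : {a : ℕ →₀ ℕ // IsZeckendorf a} ≃ {b : ℕ →₀ ℕ // IsChungGraham b},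
      ∀ a, fibVal (f a).1 = fibVal a.1) := by
  constructor
  · intro n a b _ ha _ hb
    rw [ha, hb]
  · have hZ : Function.Bijective
        (fun a : {a : ℕ →₀ ℕ // IsZeckendorf a} => fibVal a.1) := by
      constructor
      · intro x y h
        apply Subtype.ext
        calc x.1 = ZCG.zeck (fibVal x.1) := (ZCG.zeck_fibVal _ x.1 x.2 rfl).symm
          _ = ZCG.zeck (fibVal y.1) := by rw [show fibVal x.1 = fibVal y.1 from h]
          _ = y.1 := ZCG.zeck_fibVal _ y.1 y.2 rfl
      · intro n
        exact ⟨⟨ZCG.zeck n, ZCG.zeck_isZeckendorf n⟩, ZCG.fibVal_zeck n⟩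
    have hC : Function.Bijective
        (fun b : {b : ℕ →₀ ℕ // IsChungGraham b} => fibVal b.1) := by
      constructor
      · intro x y h
        apply Subtype.ext
        calc x.1 = ZCG.cg (fibVal x.1) := (ZCG.cg_fibVal _ x.1 x.2 rfl).symm
          _ = ZCG.cg (fibVal y.1) := by rw [show fibVal x.1 = fibVal y.1 from h]
          _ = y.1 := ZCG.cg_fibVal _ y.1 y.2 rfl
      · intro n
        exact ⟨⟨ZCG.cg n, ZCG.cg_isCG n⟩, ZCG.fibVal_cg n⟩
    let eZ := Equiv.ofBijective _ hZ
    let eC := Equiv.ofBijective _ hC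
    refine ⟨eZ.trans eC.symm, ?_⟩
    intro a
    show fibVal (eC.symm (eZ a)).1 = fibVal a.1
    exact eC.apply_symm_apply (eZ a)
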